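/- A perm algebra E factorizes through two given perm subalgebras A and V (i.e., E = A + V and A ∩ V = {0}) if and only if there exists a matched pair of perm algebras (A, V, ⇀, ↼, ⊳, ⊲) such that E is isomorphic to the bicrossed product A ⋈ V. -/
import Mathlib


/-- The multiplication of a perm subalgebra, restricted to the subtype. -/
def subMul {k E : Type*} [Field k] [AddCommGroup E] [Module k E]
    (mul : E →ₗ[k] E →ₗ[k] E) (A : Submodule k E)
    (hA : ∀ a ∈ A, ∀ b ∈ A, mul a b ∈ A) : A → A → A :=
  fun a b => ⟨mul a b, hA _ a.2 _ b.2⟩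

/-- The bicrossed-product multiplication on `↥A × ↥V` attached to `(⇀, ↼, ⊳, ⊲)`. -/
def subBicrossedMul {k E : Type*} [Field k] [AddCommGroup E] [Module k E]
    (mul : E →ₗ[k] E →ₗ[k] E) (A V : Submodule k E)
    (hA : ∀ a ∈ A, ∀ b ∈ A, mul a b ∈ A) (hV : ∀ a ∈ V, ∀ b ∈ V, mul a b ∈ V)
    (l : A →ₗ[k] V →ₗ[k] V) (r : V →ₗ[k] A →ₗ[k] V)
    (s : V →ₗ[k] A →ₗ[k] A) (t : A →ₗ[k] V →ₗ[k] A) :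
    A × V → A × V → A × V :=
  fun p q =>
    (subMul mul A hA p.1 q.1 + s p.2 q.1 + t p.1 q.2,
     subMul mul V hV p.2 q.2 + l p.1 q.2 + r p.2 q.1)

/-- A perm algebra `E` factorizes through two given perm subalgebras `A` and `V`
(that is, `E = A + V` and `A ∩ V = 0`) if and only if there exists a matched pair
structure `(A, V, ⇀, ↼, ⊳, ⊲)` such that `E` is isomorphic to the bicrossed product
`A ⋈ V` via `(a, v) ↦ a + v`. -/
theorem factorization_iff_matched_pair {k E : Type*} [Field k] [AddCommGroup E] [Module k E]
    (mul : E →ₗ[k] E →ₗ[k] E)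
    (hp1 : ∀ x y z, mul (mul x y) z = mul x (mul y z))
    (hp2 : ∀ x y z, mul x (mul y z) = mul x (mul z y))
    (A V : Submodule k E)
    (hA : ∀ a ∈ A, ∀ b ∈ A, mul a b ∈ A)
    (hV : ∀ a ∈ V, ∀ b ∈ V, mul a b ∈ V) :
    (A ⊔ V = ⊤ ∧ A ⊓ V = ⊥)
    ↔
    (∃ (l : A →ₗ[k] V →ₗ[k] V) (r : V →ₗ[k] A →ₗ[k] V)
       (s : V →ₗ[k] A →ₗ[k] A) (t : A →ₗ[k] V →ₗ[k] A),
      -- matched pair: the bicrossed product is a perm algebra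
      (∀ x y z : A × V,
        subBicrossedMul mul A V hA hV l r s t
            (subBicrossedMul mul A V hA hV l r s t x y) z =
          subBicrossedMul mul A V hA hV l r s t x
            (subBicrossedMul mul A V hA hV l r s t y z) ∧
        subBicrossedMul mul A V hA hV l r s t x
            (subBicrossedMul mul A V hA hV l r s t y z) =
          subBicrossedMul mul A V hA hV l r s t x
            (subBicrossedMul mul A V hA hV l r s t z y)) ∧
      -- `(a, v) ↦ a + v` is an isomorphism of perm algebras `A ⋈ V ≅ E`
      (∀ x y : A × V,
        ((subBicrossedMul mul A V hA hV l r s t x y).1 : E) +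
            ((subBicrossedMul mul A V hA hV l r s t x y).2 : E) =
          mul ((x.1 : E) + (x.2 : E)) ((y.1 : E) + (y.2 : E))) ∧
      Function.Bijective (fun x : A × V => ((x.1 : E) + (x.2 : E)))) := by
  constructor
  · rintro ⟨hsup, hinf⟩
    have hc : IsCompl A V := ⟨disjoint_iff.mpr hinf, codisjoint_iff.mpr hsup⟩
    set πA : E →ₗ[k] A := A.linearProjOfIsCompl V hc with hπA
    set πV : E →ₗ[k] V := V.linearProjOfIsCompl A hc.symm with hπV
    have hdecomp : ∀ x : E, ((πA x : E) + (πV x : E)) = x := fun x =>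
      Submodule.projection_add_projection_eq_self hc x
    set l : A →ₗ[k] V →ₗ[k] V := (mul.compl₁₂ A.subtype V.subtype).compr₂ πV with hl
    set r : V →ₗ[k] A →ₗ[k] V := (mul.compl₁₂ V.subtype A.subtype).compr₂ πV with hr
    set s : V →ₗ[k] A →ₗ[k] A := (mul.compl₁₂ V.subtype A.subtype).compr₂ πA with hs
    set t : A →ₗ[k] V →ₗ[k] A := (mul.compl₁₂ A.subtype V.subtype).compr₂ πA with ht
    have hmul : ∀ x y : A × V,
        ((subBicrossedMul mul A V hA hV l r s t x y).1 : E) +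
          ((subBicrossedMul mul A V hA hV l r s t x y).2 : E) =
        mul ((x.1 : E) + (x.2 : E)) ((y.1 : E) + (y.2 : E)) := by
      rintro ⟨a1, v1⟩ ⟨a2, v2⟩
      simp only [subBicrossedMul, subMul, hl, hr, hs, ht, LinearMap.compr₂_apply,
        LinearMap.compl₁₂_apply, Submodule.coe_subtype, Submodule.coe_add]
      have h1 : ((πA (mul (v1:E) (a2:E)) : E) + (πV (mul (v1:E) (a2:E)) : E)) =
          mul (v1:E) (a2:E) := hdecomp _
      have h2 : ((πA (mul (a1:E) (v2:E)) : E) + (πV (mul (a1:E) (v2:E)) : E)) =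
          mul (a1:E) (v2:E) := hdecomp _
      simp only [map_add, LinearMap.add_apply]
      conv_rhs => rw [← h1, ← h2]
      abel
    have hinj : Function.Injective (fun x : A × V => ((x.1 : E) + (x.2 : E))) :=
      (Submodule.prodEquivOfIsCompl A V hc).injective
    refine ⟨l, r, s, t, ?_, hmul, (Submodule.prodEquivOfIsCompl A V hc).bijective⟩
    intro x y z
    constructor
    · apply hinj
      show _ + _ = _ + _
      rw [hmul, hmul, hmul, hmul, hp1]
    · apply hinj
      show _ + _ = _ + _
      rw [hmul, hmul, hmul, hmul, hp2]
  · rintro ⟨l, r, s, t, _, _, hinjsurj⟩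
    obtain ⟨hinj, hsurj⟩ := hinjsurj
    constructor
    · rw [eq_top_iff]
      intro x _
      obtain ⟨⟨a, v⟩, hav⟩ := hsurj x
      rw [← hav]
      exact Submodule.add_mem_sup a.2 v.2
    · rw [eq_bot_iff]
      rintro x ⟨hxA, hxV⟩
      have h0 : (fun x : A × V => ((x.1 : E) + (x.2 : E))) (⟨x, hxA⟩, -⟨x, hxV⟩) =
          (fun x : A × V => ((x.1 : E) + (x.2 : E))) (0, 0) := by
        simp
      have := hinj h0
      have : (⟨x, hxA⟩ : A) = 0 := (Prod.mk.injEq _ _ _ _ ▸ this).1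
      simpa [Submodule.mem_bot] using congrArg Subtype.val this
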